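/- If A, B are positive invertible operators with h·A ≤ B ≤ h'·A for some 1 < h ≤ h' (or 0 < h' ≤ ... ≤ h < 1), then for all ν ∈ [0,1], K(h)^r · (A #_ν B) ≤ (1−ν)A + νB, where r = min{ν,1−ν} and K(h) = (h+1)²/(4h). -/

import Mathlib

/-- The Kantorovich constant. -/
noncomputable def Kc (x : ℝ) : ℝ := (x + 1) ^ 2 / (4 * x)

/-- The weighted operator geometric mean `A #_ν B`. -/
noncomputable def sharp {𝒜 : Type*} [CStarAlgebra 𝒜] [PartialOrder 𝒜] [StarOrderedRing 𝒜] (ν : ℝ) (a b : 𝒜) : 𝒜 :=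
  CFC.rpow a (1/2) * CFC.rpow (CFC.rpow a (-(1/2)) * b * CFC.rpow a (-(1/2))) ν * CFC.rpow a (1/2)

open scoped NNReal in
private lemma Kc_key {h x ν : ℝ} (hh : 1 < h) (hx : h ≤ x) (hν0 : 0 ≤ ν) (hν1 : ν ≤ 1) :
    Kc h ^ (min ν (1 - ν)) * x ^ ν ≤ (1 - ν) + ν * x := by
  set r := min ν (1 - ν) with hr
  have hx1 : (1:ℝ) < x := hh.trans_le hx
  have hx0 : (0:ℝ) < x := by linarith
  have hh0 : (0:ℝ) < h := by linarith
  have hr0 : 0 ≤ r := le_min hν0 (by linarith)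
  have hrν : r ≤ ν := min_le_left _ _
  have hr1ν : r ≤ 1 - ν := min_le_right _ _
  have hKh : 0 < Kc h := by unfold Kc; positivity
  have hKx0 : (0:ℝ) ≤ Kc x := by unfold Kc; positivity
  have hKmono : Kc h ≤ Kc x := by
    unfold Kc
    rw [div_le_div_iff₀ (by positivity) (by positivity)]
    nlinarith [mul_nonneg (sub_nonneg.2 hx) (by nlinarith : (0:ℝ) ≤ x * h - 1)]
  have h1 : Kc h ^ r * x ^ ν ≤ Kc x ^ r * x ^ ν :=
    mul_le_mul_of_nonneg_right (Real.rpow_le_rpow hKh.le hKmono hr0)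
      (Real.rpow_nonneg hx0.le _)
  refine h1.trans ?_
  have hxν : x ^ ν = x ^ r * x ^ (ν - r) := by
    rw [← Real.rpow_add hx0]; ring_nf
  have key : Kc x ^ r * x ^ ν = ((x + 1) / 2) ^ (2 * r) * x ^ (ν - r) := by
    rw [hxν, ← mul_assoc, ← Real.mul_rpow hKx0 hx0.le]
    congr 1
    have h2 : Kc x * x = ((x + 1) / 2) ^ (2:ℕ) := by
      unfold Kc; field_simp; ring
    rw [h2, ← Real.rpow_natCast ((x + 1) / 2) 2, ← Real.rpow_mul (by positivity)]
    norm_num [mul_comm]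
  rw [key]
  have amgm := Real.geom_mean_le_arith_mean3_weighted
    (by linarith : (0:ℝ) ≤ 2 * r) (by linarith : (0:ℝ) ≤ ν - r)
    (by linarith : (0:ℝ) ≤ 1 - r - ν)
    (by positivity : (0:ℝ) ≤ (x + 1) / 2) hx0.le zero_le_one (by ring)
  calc ((x + 1) / 2) ^ (2 * r) * x ^ (ν - r)
      = ((x + 1) / 2) ^ (2 * r) * x ^ (ν - r) * 1 ^ (1 - r - ν) := by
        rw [Real.one_rpow, mul_one]
    _ ≤ 2 * r * ((x + 1) / 2) + (ν - r) * x + (1 - r - ν) * 1 := amgm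
    _ = (1 - ν) + ν * x := by ring


open scoped NNReal in
theorem stmt15 {𝒜 : Type*} [CStarAlgebra 𝒜] [PartialOrder 𝒜] [StarOrderedRing 𝒜]
    (A B : 𝒜) (hA : 0 ≤ A) (hB : 0 ≤ B) [Invertible A] [Invertible B]
    (h h' : ℝ) (hh : 1 < h) (hhh' : h ≤ h')
    (h1 : h • (1:𝒜) ≤ CFC.rpow A (-(1/2)) * B * CFC.rpow A (-(1/2)))
    (h2 : CFC.rpow A (-(1/2)) * B * CFC.rpow A (-(1/2)) ≤ h' • (1:𝒜))
    (ν : ℝ) (hν : ν ∈ Set.Icc (0:ℝ) 1) :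
    Kc h ^ (min ν (1 - ν)) • sharp ν A B ≤ (1 - ν) • A + ν • B := by
  obtain ⟨hν0, hν1⟩ := hν
  have hAunit : IsUnit A := isUnit_of_invertible A
  have hA0 : 0 ∉ spectrum ℝ≥0 A := spectrum.zero_notMem ℝ≥0 hAunit
  set M : 𝒜 := CFC.rpow A (-(1/2)) with hM
  set P : 𝒜 := CFC.rpow A (1/2) with hP
  have hPnn : (0:𝒜) ≤ P := CFC.rpow_nonneg
  have hMnn : (0:𝒜) ≤ M := CFC.rpow_nonneg
  have hPsa : IsSelfAdjoint P := .of_nonneg hPnn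
  set C : 𝒜 := M * B * M with hC
  have hCnn : (0:𝒜) ≤ C := conjugate_nonneg_of_nonneg hB hMnn
  have hCsa : IsSelfAdjoint C := .of_nonneg hCnn
  -- spectrum bounds
  have hspec1 : ∀ x ∈ spectrum ℝ C, h ≤ x := by
    refine (algebraMap_le_iff_le_spectrum (R := ℝ) (a := C) hCsa).mp ?_
    rwa [Algebra.algebraMap_eq_smul_one]
  have hspec2 : ∀ x ∈ spectrum ℝ C, x ≤ h' := by
    refine (le_algebraMap_iff_spectrum_le (R := ℝ) (a := C) hCsa).mp ?_
    rwa [Algebra.algebraMap_eq_smul_one]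
  -- rpow as real cfc
  have hrpow : CFC.rpow C ν = cfc (fun x : ℝ => x ^ ν) C := by
    rw [show CFC.rpow C ν = cfc (fun x : ℝ≥0 => x ^ ν) C from rfl,
      cfc_nnreal_eq_real _ _ hCnn]
    refine cfc_congr fun x hx => ?_
    have hx0 : (0:ℝ) ≤ x := le_trans (by linarith) (hspec1 x hx)
    simp [NNReal.coe_rpow, Real.coe_toNNReal x hx0]
  have hcont : ContinuousOn (fun x : ℝ => x ^ ν) (spectrum ℝ C) := fun x _ =>
    (Real.continuousAt_rpow_const x ν (Or.inr hν0)).continuousWithinAt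
  set r := min ν (1 - ν) with hrdef
  have hkey : Kc h ^ r • CFC.rpow C ν ≤ (1 - ν) • (1:𝒜) + ν • C := by
    rw [hrpow, ← cfc_smul (Kc h ^ r) _ C hcont]
    have hrhs : cfc (fun x : ℝ => (1 - ν) + ν * x) C = (1 - ν) • (1:𝒜) + ν • C := by
      rw [cfc_const_add (1 - ν) (fun x => ν * x) C (by fun_prop) hCsa,
        cfc_const_mul_id ν C hCsa, Algebra.algebraMap_eq_smul_one]
    rw [← hrhs]
    exact cfc_mono (fun x hx => by
        simpa [smul_eq_mul] using Kc_key hh (hspec1 x hx) hν0 hν1)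
      (hcont.const_smul (Kc h ^ r)) (by fun_prop)
  have hconj := hPsa.conjugate_le_conjugate hkey
  have hPP : P * P = A := by
    rw [hP, show CFC.rpow A (1/2) = A ^ ((1:ℝ)/2) from rfl, ← CFC.rpow_add hAunit]
    norm_num
    exact CFC.rpow_one A hA
  have hPM : P * M = 1 := CFC.rpow_mul_rpow_neg (1/2) (hAunit.isStrictlyPositive hA)
  have hMP : M * P = 1 := CFC.rpow_neg_mul_rpow (1/2) (hAunit.isStrictlyPositive hA)
  have hPCP : P * C * P = B := by
    have : P * (M * B * M) * P = (P * M) * B * (M * P) := by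
      simp only [mul_assoc]
    rw [hC, this, hPM, hMP, one_mul, mul_one]
  have hsharp : sharp ν A B = P * CFC.rpow C ν * P := rfl
  calc Kc h ^ r • sharp ν A B
      = P * (Kc h ^ r • CFC.rpow C ν) * P := by
        rw [hsharp, mul_smul_comm, smul_mul_assoc]
    _ ≤ P * ((1 - ν) • (1:𝒜) + ν • C) * P := hconj
    _ = (1 - ν) • (P * 1 * P) + ν • (P * C * P) := by
        simp only [mul_add, add_mul, mul_smul_comm, smul_mul_assoc]
    _ = (1 - ν) • A + ν • B := by rw [mul_one, hPP, hPCP]
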